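/- Let C be a nontrivial 1-perfect code in the Johnson scheme J(2w+a, w) with w ≥ 1, a ≥ 0, and let p_1, …, p_r be the distinct prime divisors of 1 + w(w+a). Then 0 < Σ_{i=1}^r log_{w+a}(p_i) − (1 + log_{w+a}(w)) ≤ 1/(w(w+a)). -/

import Mathlib

open Finset


namespace Stmt10Aux

variable {n w : ℕ}

/-- Number of `w`-subsets of `Fin n` containing a fixed set `T` of size `i`. -/
lemma card_supersets (T : Finset (Fin n)) {i : ℕ} (hT : T.card = i) (hiw : i ≤ w) :
    #{s ∈ (univ : Finset (Fin n)).powersetCard w | T ⊆ s} = (n - i).choose (w - i) := by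
  classical
  have himg : {s ∈ (univ : Finset (Fin n)).powersetCard w | T ⊆ s} =
      ((univ \ T).powersetCard (w - i)).image (fun t => t ∪ T) := by
    ext s
    simp only [mem_filter, mem_powersetCard, mem_image]
    constructor
    · rintro ⟨⟨-, hcard⟩, hTs⟩
      refine ⟨s \ T, ⟨fun x hx => ?_, ?_⟩, ?_⟩
      · simp only [mem_sdiff] at hx ⊢
        exact ⟨mem_univ _, hx.2⟩
      · rw [card_sdiff_of_subset hTs, hcard, hT]
      · rw [sdiff_union_self_eq_union, union_eq_left.mpr hTs]
    · rintro ⟨t, ⟨hsub, hcard⟩, rfl⟩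
      have hdisj : Disjoint t T := by
        rw [disjoint_iff_inter_eq_empty]
        ext x
        simp only [mem_inter, notMem_empty, iff_false]
        rintro ⟨hxt, hxT⟩
        exact (mem_sdiff.mp (hsub hxt)).2 hxT
      refine ⟨⟨subset_univ _, ?_⟩, subset_union_right⟩
      rw [card_union_of_disjoint hdisj, hcard, hT]
      omega
  rw [himg, card_image_of_injOn, card_powersetCard, card_sdiff_of_subset (subset_univ T), card_univ,
    Fintype.card_fin, hT]
  intro t1 h1 t2 h2 heq
  simp only at heq
  rw [mem_coe, mem_powersetCard] at h1 h2
  have d1 : Disjoint t1 T := by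
    rw [disjoint_left]; intro x hx; exact (mem_sdiff.mp (h1.1 hx)).2
  have d2 : Disjoint t2 T := by
    rw [disjoint_left]; intro x hx; exact (mem_sdiff.mp (h2.1 hx)).2
  ext x
  constructor
  · intro hx
    have : x ∈ t2 ∪ T := heq ▸ (mem_union_left _ hx)
    rcases mem_union.mp this with h | h
    · exact h
    · exact absurd h (disjoint_left.mp d1 hx)
  · intro hx
    have : x ∈ t1 ∪ T := heq ▸ (mem_union_left _ hx)
    rcases mem_union.mp this with h | h
    · exact h
    · exact absurd h (disjoint_left.mp d2 hx)

end Stmt10Aux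

namespace Stmt10Aux
namespace NScount

variable {n w : ℕ}

/-- The set of `w`-subsets containing `T` and within Johnson distance 1 of `c`. -/
def NS (w : ℕ) (c T : Finset (Fin n)) : Finset (Finset (Fin n)) :=
  {s ∈ (univ : Finset (Fin n)).powersetCard w | T ⊆ s ∧ w ≤ (c ∩ s).card + 1}

lemma NS_card (c T : Finset (Fin n)) (hc : c.card = w) (hw : 1 ≤ w) :
    (NS w c T).card =
      (if T ⊆ c then 1 + (c \ T).card * ((univ : Finset (Fin n)) \ c).card else 0) +
      (if (T \ c).card = 1 then (c \ T).card else 0) := by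
  classical
  -- split `NS` into `s = c` and `s ≠ c`
  have hsplit : (NS w c T).card =
      #{s ∈ NS w c T | s = c} + #{s ∈ NS w c T | s ≠ c} :=
    (card_filter_add_card_filter_not (fun s => s = c)).symm
  -- the `s = c` part
  have h1 : #{s ∈ NS w c T | s = c} = if T ⊆ c then 1 else 0 := by
    by_cases hTc : T ⊆ c
    · rw [if_pos hTc]
      have : {s ∈ NS w c T | s = c} = {c} := by
        ext s
        simp only [mem_filter, mem_singleton, NS, mem_powersetCard]
        constructor
        · tauto
        · rintro rfl
          exact ⟨⟨⟨subset_univ _, hc⟩, hTc, by rw [inter_self, hc]; omega⟩, rfl⟩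
      rw [this, card_singleton]
    · rw [if_neg hTc]
      rw [card_eq_zero, filter_eq_empty_iff]
      rintro s hs rfl
      simp only [NS, mem_filter] at hs
      exact hTc hs.2.1
  -- the `s ≠ c` part : image of pairs (u, v)
  set W : Finset (Fin n) := {v ∈ (univ : Finset (Fin n)) \ c | T \ c ⊆ {v}} with hW
  set P : Finset (Fin n × Fin n) := (c \ T) ×ˢ W with hP
  set g : Fin n × Fin n → Finset (Fin n) := fun uv => insert uv.2 (c.erase uv.1) with hg
  have h2 : {s ∈ NS w c T | s ≠ c} = P.image g := by
    ext s
    simp only [mem_filter, mem_image, NS, mem_powersetCard]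
    constructor
    · rintro ⟨⟨⟨-, hcard⟩, hTs, hdist⟩, hne⟩
      -- c \ s and s \ c are singletons
      have hcsne : c \ s ≠ ∅ := by
        intro hemp
        have hsub : c ⊆ s := by
          intro x hx
          by_contra hxs
          have : x ∈ c \ s := mem_sdiff.mpr ⟨hx, hxs⟩
          simp [hemp] at this
        exact hne ((eq_of_subset_of_card_le hsub (by omega)).symm)
      have hinter : (c ∩ s).card + (c \ s).card = w := by
        rw [← hc]; exact card_inter_add_card_sdiff c s
      have hcs : (c \ s).card = 1 := by
        have : 1 ≤ (c \ s).card := card_pos.mpr (nonempty_iff_ne_empty.mpr hcsne)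
        omega
      have hsc : (s \ c).card = 1 := by
        have h3 : (s ∩ c).card + (s \ c).card = w := by
          rw [← hcard]; exact card_inter_add_card_sdiff s c
        rw [inter_comm] at h3
        omega
      obtain ⟨u, hu⟩ := card_eq_one.mp hcs
      obtain ⟨v, hv⟩ := card_eq_one.mp hsc
      have huc : u ∈ c := by
        have : u ∈ c \ s := by rw [hu]; exact mem_singleton_self u
        exact (mem_sdiff.mp this).1
      have hus : u ∉ s := by
        have : u ∈ c \ s := by rw [hu]; exact mem_singleton_self u
        exact (mem_sdiff.mp this).2
      have hvs : v ∈ s := by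
        have : v ∈ s \ c := by rw [hv]; exact mem_singleton_self v
        exact (mem_sdiff.mp this).1
      have hvc : v ∉ c := by
        have : v ∈ s \ c := by rw [hv]; exact mem_singleton_self v
        exact (mem_sdiff.mp this).2
      refine ⟨(u, v), ?_, ?_⟩
      · rw [hP, mem_product]
        constructor
        · simp only [mem_sdiff]
          exact ⟨huc, fun hT' => hus (hTs hT')⟩
        · rw [hW, mem_filter]
          refine ⟨mem_sdiff.mpr ⟨mem_univ _, hvc⟩, ?_⟩
          intro x hx
          have hxs : x ∈ s := hTs (mem_sdiff.mp hx).1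
          have hxc : x ∉ c := (mem_sdiff.mp hx).2
          have : x ∈ s \ c := mem_sdiff.mpr ⟨hxs, hxc⟩
          rw [hv] at this
          exact this
      · -- g (u,v) = s
        rw [hg]
        simp only
        apply eq_of_subset_of_card_le
        · -- insert v (c.erase u) ⊆ s
          intro x hx
          rcases mem_insert.mp hx with rfl | hx'
          · exact hvs
          · have hxc : x ∈ c := mem_of_mem_erase hx'
            have hxu : x ≠ u := ne_of_mem_erase hx'
            by_contra hxs
            have : x ∈ c \ s := mem_sdiff.mpr ⟨hxc, hxs⟩
            rw [hu, mem_singleton] at this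
            exact hxu this
        · -- card s ≤ card (insert v (c.erase u))
          rw [card_insert_of_notMem (fun h => hvc (mem_of_mem_erase h)),
            card_erase_of_mem huc, hc, hcard]
          omega
    · rintro ⟨⟨u, v⟩, huv, rfl⟩
      rw [hP, mem_product] at huv
      obtain ⟨hu, hv⟩ := huv
      rw [hW, mem_filter] at hv
      have huc : u ∈ c := (mem_sdiff.mp hu).1
      have huT : u ∉ T := (mem_sdiff.mp hu).2
      have hvc : v ∉ c := (mem_sdiff.mp hv.1).2
      have hcard : (g (u, v)).card = w := by
        rw [hg]
        simp only
        rw [card_insert_of_notMem (fun h => hvc (mem_of_mem_erase h)),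
          card_erase_of_mem huc, hc]
        omega
      have hsub : c.erase u ⊆ c ∩ g (u, v) := by
        intro x hx
        exact mem_inter.mpr ⟨mem_of_mem_erase hx, mem_insert_of_mem hx⟩
      refine ⟨⟨⟨subset_univ _, hcard⟩, ?_, ?_⟩, ?_⟩
      · -- T ⊆ g (u,v)
        intro x hx
        by_cases hxc : x ∈ c
        · apply mem_insert_of_mem
          exact mem_erase.mpr ⟨fun h => huT (by rwa [h] at hx), hxc⟩
        · have : x ∈ T \ c := mem_sdiff.mpr ⟨hx, hxc⟩
          have := hv.2 this
          rw [mem_singleton] at this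
          rw [this]
          exact mem_insert_self _ _
      · -- distance
        have : (c.erase u).card ≤ (c ∩ g (u, v)).card := card_le_card hsub
        rw [card_erase_of_mem huc, hc] at this
        omega
      · -- ≠ c
        intro heq
        exact hvc (heq ▸ mem_insert_self v (c.erase u))
  have h3 : (P.image g).card = P.card := by
    apply card_image_of_injOn
    rintro ⟨u1, v1⟩ h1' ⟨u2, v2⟩ h2' heq
    rw [mem_coe, hP, mem_product] at h1' h2'
    have hu1c : u1 ∈ c := (mem_sdiff.mp h1'.1).1
    have hu2c : u2 ∈ c := (mem_sdiff.mp h2'.1).1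
    have hv1c : v1 ∉ c := (mem_sdiff.mp (mem_filter.mp h1'.2).1).2
    have hv2c : v2 ∉ c := (mem_sdiff.mp (mem_filter.mp h2'.2).1).2
    simp only [hg] at heq
    have hv : v1 = v2 := by
      have h4 : v1 ∈ insert v2 (c.erase u2) := heq ▸ mem_insert_self v1 (c.erase u1)
      rcases mem_insert.mp h4 with h | h
      · exact h
      · exact absurd (mem_of_mem_erase h) hv1c
    have hu : u1 = u2 := by
      by_contra hne
      have h5 : u2 ∈ insert v1 (c.erase u1) := by
        apply mem_insert_of_mem
        exact mem_erase.mpr ⟨fun h => hne h.symm, hu2c⟩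
      rw [heq] at h5
      rcases mem_insert.mp h5 with h | h
      · exact hv2c (h ▸ hu2c)
      · exact (mem_erase.mp h).1 rfl
    rw [hu, hv]
  have h4 : P.card = (c \ T).card * W.card := by rw [hP, card_product]
  -- evaluate W.card
  have h5 : W.card = (if T ⊆ c then ((univ : Finset (Fin n)) \ c).card else
      (if (T \ c).card = 1 then 1 else 0)) := by
    by_cases hTc : T ⊆ c
    · rw [if_pos hTc]
      have : W = (univ : Finset (Fin n)) \ c := by
        rw [hW]
        apply filter_true_of_mem
        intro v hv x hx
        exact absurd ((mem_sdiff.mp hx).1) (fun h => (mem_sdiff.mp hx).2 (hTc h))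
      rw [this]
    · rw [if_neg hTc]
      by_cases hone : (T \ c).card = 1
      · rw [if_pos hone]
        obtain ⟨t, ht⟩ := card_eq_one.mp hone
        have htc : t ∉ c := by
          have : t ∈ T \ c := ht ▸ mem_singleton_self t
          exact (mem_sdiff.mp this).2
        have : W = {t} := by
          ext v
          rw [hW, mem_filter, mem_singleton]
          constructor
          · rintro ⟨-, hsub⟩
            have : t ∈ ({v} : Finset (Fin n)) := hsub (ht ▸ mem_singleton_self t)
            exact (mem_singleton.mp this).symm
          · rintro rfl
            refine ⟨mem_sdiff.mpr ⟨mem_univ _, htc⟩, ?_⟩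
            rw [ht]
        rw [this, card_singleton]
      · rw [if_neg hone]
        rw [card_eq_zero, hW, filter_eq_empty_iff]
        intro v hv hsub
        have h6 : T \ c ≠ ∅ := by
          intro hemp
          exact hTc fun x hx => by
            by_contra hxc
            have : x ∈ T \ c := mem_sdiff.mpr ⟨hx, hxc⟩
            simp [hemp] at this
        have h7 : 1 ≤ (T \ c).card := card_pos.mpr (nonempty_iff_ne_empty.mpr h6)
        have h8 : (T \ c).card ≤ 1 := by
          calc (T \ c).card ≤ ({v} : Finset (Fin n)).card := card_le_card hsub
          _ = 1 := card_singleton v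
        omega
  rw [hsplit, h1, h2, h3, h4, h5]
  by_cases hTc : T ⊆ c
  · have hT0 : (T \ c).card = 0 := by
      rw [card_eq_zero, sdiff_eq_empty_iff_subset]; exact hTc
    simp only [if_pos hTc, hT0]
    norm_num
  · simp only [if_neg hTc]
    by_cases hone : (T \ c).card = 1
    · simp only [if_pos hone]; omega
    · simp only [if_neg hone]; omega

end NScount

end Stmt10Aux

namespace Stmt10Aux

open NScount

variable {n w : ℕ}

/-- number of codewords containing `T` -/
def fF (F : Finset (Finset (Fin n))) (T : Finset (Fin n)) : ℕ := #{c ∈ F | T ⊆ c}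

/-- number of codewords `c` with `#(T \ c) = 1` -/
def gF (F : Finset (Finset (Fin n))) (T : Finset (Fin n)) : ℕ := #{c ∈ F | #(T \ c) = 1}

lemma identity1 (F : Finset (Finset (Fin n))) (hcard : ∀ c ∈ F, c.card = w)
    (huniq : ∀ s : Finset (Fin n), s.card = w → ∃! c, c ∈ F ∧ w ≤ (c ∩ s).card + 1)
    (hw : 1 ≤ w) {i : ℕ} (hiw : i ≤ w) (T : Finset (Fin n)) (hT : T.card = i) :
    (n - i).choose (w - i) = fF F T * (1 + (w - i) * (n - w)) + gF F T * (w - i + 1) := by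
  set cw : Finset (Fin n) → Finset (Fin n) :=
    fun s => if h : s.card = w then (huniq s h).choose else ∅ with hcw
  have hcwspec : ∀ s : Finset (Fin n), s.card = w →
      (cw s ∈ F ∧ w ≤ (cw s ∩ s).card + 1) ∧
      ∀ c, c ∈ F ∧ w ≤ (c ∩ s).card + 1 → c = cw s := by
    intro s hs
    have h := (huniq s hs).choose_spec
    rw [hcw]
    simp only [dif_pos hs]
    exact ⟨h.1, fun c hc => h.2 c hc⟩
  set Ssup : Finset (Finset (Fin n)) := {s ∈ (univ : Finset (Fin n)).powersetCard w | T ⊆ s}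
    with hSsup
  have hcount : Ssup.card = (n - i).choose (w - i) := card_supersets T hT hiw
  have hmap : ∀ s ∈ Ssup, cw s ∈ F := by
    intro s hs
    rw [hSsup, mem_filter, mem_powersetCard] at hs
    exact (hcwspec s hs.1.2).1.1
  have hfib : Ssup.card = ∑ c ∈ F, #{s ∈ Ssup | cw s = c} :=
    card_eq_sum_card_fiberwise hmap
  have hfib2 : ∀ c ∈ F, {s ∈ Ssup | cw s = c} = NS w c T := by
    intro c hc
    ext s
    rw [mem_filter, hSsup, mem_filter, NS, mem_filter]
    constructor
    · rintro ⟨⟨hpow, hTs⟩, hcwc⟩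
      have hs : s.card = w := (mem_powersetCard.mp hpow).2
      have := (hcwspec s hs).1.2
      rw [hcwc] at this
      exact ⟨hpow, hTs, this⟩
    · rintro ⟨hpow, hTs, hdist⟩
      have hs : s.card = w := (mem_powersetCard.mp hpow).2
      exact ⟨⟨hpow, hTs⟩, ((hcwspec s hs).2 c ⟨hc, hdist⟩).symm⟩
  have huniv : ∀ c ∈ F, ((univ : Finset (Fin n)) \ c).card = n - w := by
    intro c hc
    rw [card_sdiff_of_subset (subset_univ c), card_univ, Fintype.card_fin, hcard c hc]
  have hNS : ∀ c ∈ F, (NS w c T).card =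
      (if T ⊆ c then 1 + (w - i) * (n - w) else 0) +
      (if (T \ c).card = 1 then w - i + 1 else 0) := by
    intro c hc
    rw [NS_card c T (hcard c hc) hw, huniv c hc]
    by_cases hTc : T ⊆ c
    · have h1 : (c \ T).card = w - i := by
        rw [card_sdiff_of_subset hTc, hcard c hc, hT]
      have hT0 : (T \ c).card = 0 := by
        rw [card_eq_zero, sdiff_eq_empty_iff_subset]; exact hTc
      simp only [if_pos hTc, hT0, h1]
      norm_num
    · simp only [if_neg hTc]
      by_cases hone : (T \ c).card = 1
      · have h2 : (T ∩ c).card + (T \ c).card = i := by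
          rw [← hT]; exact card_inter_add_card_sdiff T c
        have h3 : (c \ T).card = w - i + 1 := by
          have h4 : (c ∩ T).card + (c \ T).card = w := by
            rw [← hcard c hc]; exact card_inter_add_card_sdiff c T
          rw [inter_comm] at h4
          omega
        simp only [if_pos hone, h3]
      · simp only [if_neg hone]
  calc (n - i).choose (w - i) = Ssup.card := hcount.symm
  _ = ∑ c ∈ F, #{s ∈ Ssup | cw s = c} := hfib
  _ = ∑ c ∈ F, ((if T ⊆ c then 1 + (w - i) * (n - w) else 0) +
      (if (T \ c).card = 1 then w - i + 1 else 0)) := by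
    apply Finset.sum_congr rfl
    intro c hc
    rw [hfib2 c hc, hNS c hc]
  _ = fF F T * (1 + (w - i) * (n - w)) + gF F T * (w - i + 1) := by
    rw [Finset.sum_add_distrib]
    congr 1
    · rw [← Finset.sum_filter, Finset.sum_const, smul_eq_mul, fF, mul_comm]
    · rw [← Finset.sum_filter, Finset.sum_const, smul_eq_mul, gF, mul_comm]

lemma identity2 (F : Finset (Finset (Fin n))) {j : ℕ} (T : Finset (Fin n))
    (hT : T.card = j + 1) :
    ∑ T' ∈ T.powersetCard j, fF F T' = gF F T + (j+1) * fF F T := by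
  have hswap : ∑ T' ∈ T.powersetCard j, fF F T' =
      ∑ c ∈ F, ((T ∩ c).card.choose j) := by
    calc ∑ T' ∈ T.powersetCard j, fF F T'
        = ∑ T' ∈ T.powersetCard j, ∑ c ∈ F, (if T' ⊆ c then 1 else 0) := by
          apply Finset.sum_congr rfl
          intro T' _
          rw [fF, Finset.card_filter]
    _ = ∑ c ∈ F, ∑ T' ∈ T.powersetCard j, (if T' ⊆ c then 1 else 0) := Finset.sum_comm
    _ = ∑ c ∈ F, ((T ∩ c).card.choose j) := by
      apply Finset.sum_congr rfl
      intro c _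
      rw [← Finset.card_filter]
      have : {T' ∈ T.powersetCard j | T' ⊆ c} = (T ∩ c).powersetCard j := by
        ext T'
        simp only [mem_filter, mem_powersetCard, subset_inter_iff]
        tauto
      rw [this, card_powersetCard]
  rw [hswap]
  have hpt : ∀ c ∈ F, (T ∩ c).card.choose j =
      (if T ⊆ c then j + 1 else 0) + (if (T \ c).card = 1 then 1 else 0) := by
    intro c _
    have h2 : (T ∩ c).card + (T \ c).card = j + 1 := by
      rw [← hT]; exact card_inter_add_card_sdiff T c
    by_cases hTc : T ⊆ c
    · have hT0 : (T \ c).card = 0 := by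
        rw [card_eq_zero, sdiff_eq_empty_iff_subset]; exact hTc
      have : (T ∩ c).card = j + 1 := by omega
      rw [this, Nat.choose_succ_self_right]
      simp [hTc, hT0]
    · have hne : (T \ c).card ≠ 0 := by
        intro h
        rw [card_eq_zero, sdiff_eq_empty_iff_subset] at h
        exact hTc h
      by_cases hone : (T \ c).card = 1
      · have : (T ∩ c).card = j := by omega
        rw [this, Nat.choose_self]
        simp [hTc, hone]
      · have : (T ∩ c).card < j := by omega
        rw [Nat.choose_eq_zero_of_lt this]
        simp [hTc, hone]
  rw [Finset.sum_congr rfl hpt, Finset.sum_add_distrib]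
  have hA : ∑ c ∈ F, (if T ⊆ c then j + 1 else 0) = (j+1) * fF F T := by
    rw [← Finset.sum_filter, Finset.sum_const, smul_eq_mul, fF, mul_comm]
  have hB : ∑ c ∈ F, (if (T \ c).card = 1 then 1 else 0) = gF F T := by
    rw [← Finset.sum_filter, Finset.sum_const, smul_eq_mul, gF, mul_one]
  omega

end Stmt10Aux

namespace Stmt10Aux

variable {n w : ℕ}

theorem combinatorial_main (F : Finset (Finset (Fin n))) (hcard : ∀ c ∈ F, c.card = w)
    (huniq : ∀ s : Finset (Fin n), s.card = w → ∃! c, c ∈ F ∧ w ≤ (c ∩ s).card + 1)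
    (hw : 1 ≤ w) (hwn : w < n) :
    ∃ m, 1 ≤ m ∧ m ≤ w ∧ 1 + w * (n - w) = m * (n + 1 - m) ∧
      ∀ i < m, (1 + w * (n - w)) ∣ (n - i).choose (w - i) := by
  classical
  set Φ := 1 + w * (n - w) with hΦ
  set P : ℕ → Prop := fun i => ∀ T : Finset (Fin n), T.card = i →
    fF F T * Φ = (n - i).choose (w - i) with hPdef
  have hΦ2 : 2 ≤ Φ := by
    have : 1 ≤ w * (n - w) := Nat.one_le_iff_ne_zero.mpr (by
      intro h
      rcases Nat.mul_eq_zero.mp h with h | h <;> omega)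
    omega
  -- base case
  have hP0 : P 0 := by
    intro T hT
    have hTe : T = ∅ := card_eq_zero.mp hT
    have h1 := identity1 F hcard huniq hw (Nat.zero_le w) T hT
    have hg : gF F T = 0 := by
      rw [hTe, gF, card_eq_zero, filter_eq_empty_iff]
      intro c _
      rw [empty_sdiff, card_empty]
      omega
    simp only [Nat.sub_zero] at h1 ⊢
    rw [h1, hg, hΦ]
    ring
  -- inductive step
  have hstep : ∀ j, j + 1 ≤ w → P j → Φ ≠ (j+1) * (n - j) → P (j+1) := by
    intro j hjw hPj hD T hT
    obtain ⟨a1, ha1⟩ : ∃ a1, w = j + 1 + a1 := ⟨w - (j+1), by omega⟩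
    obtain ⟨b1, hb1⟩ : ∃ b1, n = w + b1 ∧ 1 ≤ b1 := ⟨n - w, by omega⟩
    obtain ⟨hb1, hb1pos⟩ := hb1
    have e1 : w - (j+1) = a1 := by omega
    have e2 : n - (j+1) = a1 + b1 := by omega
    have e3 : n - j = a1 + b1 + 1 := by omega
    have e4 : w - j = a1 + 1 := by omega
    have e5 : n - w = b1 := by omega
    have h1 := identity1 F hcard huniq hw hjw T hT
    rw [e1, e2, e5] at h1
    have h2 := identity2 F T hT
    have hsum : (∑ T' ∈ T.powersetCard j, fF F T') * Φ =
        (j+1) * ((a1 + b1 + 1).choose (a1 + 1)) := by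
      rw [Finset.sum_mul]
      have hall : ∀ T' ∈ T.powersetCard j, fF F T' * Φ = (a1 + b1 + 1).choose (a1 + 1) := by
        intro T' hT'
        have := hPj T' (mem_powersetCard.mp hT').2
        rwa [e3, e4] at this
      rw [Finset.sum_congr rfl hall, Finset.sum_const, card_powersetCard, hT,
        Nat.choose_succ_self_right, smul_eq_mul]
    rw [h2] at hsum
    have h3 : (a1 + b1 + 1) * ((a1 + b1).choose a1) =
        ((a1 + b1 + 1).choose (a1 + 1)) * (a1 + 1) :=
      Nat.add_one_mul_choose_eq (a1 + b1) a1
    -- pass to ℤ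
    have zh1 : ((a1 + b1).choose a1 : ℤ) =
        (fF F T : ℤ) * (1 + a1 * b1) + (gF F T : ℤ) * (a1 + 1) := by exact_mod_cast h1
    have zh2 : ((gF F T : ℤ) + ((j:ℤ)+1) * (fF F T : ℤ)) * (Φ : ℤ) =
        ((j:ℤ)+1) * ((a1 + b1 + 1).choose (a1 + 1) : ℤ) := by exact_mod_cast hsum
    have zh3 : ((a1:ℤ) + b1 + 1) * ((a1 + b1).choose a1 : ℤ) =
        ((a1 + b1 + 1).choose (a1 + 1) : ℤ) * ((a1:ℤ) + 1) := by exact_mod_cast h3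
    have zΦ : (Φ : ℤ) = 1 + ((j:ℤ) + 1 + a1) * b1 := by
      rw [hΦ, e5]; push_cast [ha1]; ring
    have hDz : (Φ : ℤ) - ((j:ℤ)+1) * ((a1:ℤ) + b1 + 1) ≠ 0 := by
      intro h
      apply hD
      have : (Φ : ℤ) = ((j:ℤ)+1) * ((a1:ℤ) + b1 + 1) := by linarith
      rw [e3]
      exact_mod_cast this
    have key : ((fF F T : ℤ) * (Φ:ℤ) - ((a1 + b1).choose a1 : ℤ)) *
        ((Φ:ℤ) - ((j:ℤ)+1) * ((a1:ℤ) + b1 + 1)) = 0 := by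
      linear_combination (-(Φ:ℤ)) * zh1 - ((a1:ℤ)+1) * zh2 + ((j:ℤ)+1) * zh3 +
        (fF F T : ℤ) * (Φ:ℤ) * zΦ
    have hfin : (fF F T : ℤ) * (Φ:ℤ) = ((a1 + b1).choose a1 : ℤ) := by
      rcases mul_eq_zero.mp key with h | h
      · linarith
      · exact absurd h hDz
    rw [e1, e2]
    exact_mod_cast hfin
  -- P w is false
  have hPw : ¬ P w := by
    intro hPw
    obtain ⟨T, -, hT⟩ := exists_subset_card_eq (s := (univ : Finset (Fin n))) (n := w)
      (by rw [card_univ, Fintype.card_fin]; omega)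
    have := hPw T hT
    rw [Nat.sub_self, Nat.choose_zero_right] at this
    have hdvd : Φ ∣ 1 := ⟨fF F T, by rw [← this]; ring⟩
    have := Nat.le_of_dvd one_pos hdvd
    omega
  -- extract the minimal failure point
  have hex : ∃ i, ¬ P i := ⟨w, hPw⟩
  set m := Nat.find hex with hm
  clear_value m
  have hmspec : ¬ P m := hm ▸ Nat.find_spec hex
  have hmin : ∀ i < m, P i := fun i hi => not_not.mp (Nat.find_min hex (hm ▸ hi))
  have hm1 : 1 ≤ m := by
    rcases Nat.eq_zero_or_pos m with h | h
    · rw [h] at hmspec; exact absurd hP0 hmspec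
    · exact h
  have hmw : m ≤ w := hm ▸ Nat.find_min' hex hPw
  obtain ⟨j, rfl⟩ : ∃ j, m = j + 1 := ⟨m - 1, by omega⟩
  have hLloyd : Φ = (j+1) * (n - j) := by
    by_contra hne
    exact hmspec (hstep j (by omega) (hmin j (by omega)) hne)
  refine ⟨j+1, by omega, hmw, ?_, ?_⟩
  · rw [hLloyd]
    congr 1
    omega
  · intro i hi
    obtain ⟨T, -, hT⟩ := exists_subset_card_eq (s := (univ : Finset (Fin n))) (n := i)
      (by rw [card_univ, Fintype.card_fin]; omega)
    have := hmin i hi T hT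
    exact ⟨fF F T, by rw [← this]; ring⟩

end Stmt10Aux

namespace Stmt10Aux


/-- Kummer computation 1: `p ∤ C(K, p^L)` where `L = log p K`. -/
lemma not_dvd_choose_pow_log {p K : ℕ} (hp : p.Prime) (hK0 : K ≠ 0) :
    ¬ p ∣ K.choose (p ^ Nat.log p K) := by
  set L := Nat.log p K with hLdef
  have hK : p ^ L ≤ K := Nat.pow_log_le_self p hK0
  have hmul : emultiplicity p (K.choose (p ^ L)) =
      #{i ∈ Ico 1 (L+1) | p ^ i ≤ (p ^ L) % p ^ i + (K - p ^ L) % p ^ i} :=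
    hp.emultiplicity_choose hK (Nat.lt_succ_self _)
  have hempty : ({i ∈ Ico 1 (L+1) | p ^ i ≤ (p ^ L) % p ^ i + (K - p ^ L) % p ^ i} : Finset ℕ)
      = ∅ := by
    rw [Finset.filter_eq_empty_iff]
    intro i hi
    simp only [mem_Ico] at hi
    have h1 : (p ^ L) % p ^ i = 0 := Nat.mod_eq_zero_of_dvd (pow_dvd_pow p (by omega))
    have h2 : (K - p ^ L) % p ^ i < p ^ i := Nat.mod_lt _ (pow_pos hp.pos i)
    omega
  have : emultiplicity p (K.choose (p ^ L)) < (1 : ℕ) := by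
    rw [hmul, hempty]
    simp
  intro hdvd
  exact not_pow_dvd_of_emultiplicity_lt this (by simpa using hdvd)

/-- Kummer computation 2: exactly one carry for `C(K, p^l + r)` when `K = p^(l+1) + r`,
`r < p^l`. -/
lemma not_sq_dvd_choose_one_carry {p l r : ℕ} (hp : p.Prime) (hr : r < p ^ l) :
    ¬ p ^ 2 ∣ (p ^ (l+1) + r).choose (p ^ l + r) := by
  set K := p ^ (l+1) + r with hKdef
  set d := p ^ l + r with hddef
  have hpl : (1:ℕ) ≤ p ^ l := Nat.one_le_pow _ _ hp.pos
  have hppow : p ^ l * p = p ^ (l+1) := (pow_succ p l).symm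
  have hp2 : 2 ≤ p := hp.two_le
  have hdK : d ≤ K := by
    have : p ^ l ≤ p ^ (l+1) := Nat.pow_le_pow_right hp.pos (by omega)
    omega
  have hll : p ^ l ≤ p ^ (l+1) := Nat.pow_le_pow_right hp.pos (by omega)
  have hKlt : K < p ^ (l+2) := by
    have h1 : p ^ (l+1) * p = p ^ (l+2) := (pow_succ p (l+1)).symm
    have h3 : p ^ (l+1) * 2 ≤ p ^ (l+1) * p := Nat.mul_le_mul_left _ hp2
    omega
  have hlog : Nat.log p K < l + 2 := by
    exact Nat.log_lt_of_lt_pow (by positivity) hKlt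
  have hmul : emultiplicity p (K.choose d) =
      #{i ∈ Ico 1 (l+2) | p ^ i ≤ d % p ^ i + (K - d) % p ^ i} :=
    hp.emultiplicity_choose hdK hlog
  have hKd : K - d = p ^ (l+1) - p ^ l := by omega
  have hfilter : ({i ∈ Ico 1 (l+2) | p ^ i ≤ d % p ^ i + (K - d) % p ^ i} : Finset ℕ)
      = {l+1} := by
    ext i
    simp only [mem_filter, mem_Ico, mem_singleton]
    constructor
    · rintro ⟨⟨hi1, hi2⟩, hcarry⟩
      by_contra hne
      have hil : i ≤ l := by omega
      have h1 : d % p ^ i = r % p ^ i := by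
        have : p ^ l % p ^ i = 0 := Nat.mod_eq_zero_of_dvd (pow_dvd_pow p hil)
        rw [hddef, Nat.add_mod, this, zero_add, Nat.mod_mod_of_dvd _ dvd_rfl]
      have h2 : (K - d) % p ^ i = 0 := by
        rw [hKd]
        exact Nat.mod_eq_zero_of_dvd
          (Nat.dvd_sub (pow_dvd_pow p (by omega)) (pow_dvd_pow p hil))
      have h3 : r % p ^ i < p ^ i := Nat.mod_lt _ (pow_pos hp.pos i)
      omega
    · rintro rfl
      refine ⟨⟨by omega, by omega⟩, ?_⟩
      have hd_lt : d < p ^ (l+1) := by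
        have : p ^ l + p ^ l ≤ p ^ l * p := by nlinarith
        omega
      have h1 : d % p ^ (l+1) = d := Nat.mod_eq_of_lt hd_lt
      have h2 : (K - d) % p ^ (l+1) = p ^ (l+1) - p ^ l := by
        rw [hKd]; exact Nat.mod_eq_of_lt (by omega)
      rw [h1, h2]
      have : p ^ l ≤ p ^ (l+1) := Nat.pow_le_pow_right hp.pos (by omega)
      omega
  have hone : emultiplicity p (K.choose d) < (2:ℕ) := by
    rw [hmul, hfilter]
    simp
  exact fun hdvd => not_pow_dvd_of_emultiplicity_lt hone hdvd

/-- The main number-theoretic theorem: the window divisibilities force squarefreeness. -/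
lemma nt_main {p α γ : ℕ} (hp : p.Prime) (hα : 1 ≤ α) (hγ : α ≤ γ)
    (hsq : p ^ 2 ∣ (α * γ + 1) * ((γ+1) * (α+1) + 1))
    (hwin : ∀ d, α + 1 ≤ d → d + α + 1 ≤ (γ+1) * (α+1) + 1 →
      p ^ 2 ∣ ((γ+1) * (α+1) + 1).choose d) : False := by
  set M := α * γ + 1 with hMdef
  set K := (γ+1) * (α+1) + 1 with hKdef
  have hp2 : 2 ≤ p := hp.two_le
  have hM1 : 1 ≤ M := by omega
  have hMK : K = M + α + γ + 1 := by rw [hKdef, hMdef]; ring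
  have hK2 : (α+1) * (α+1) < K := by
    rw [hKdef]
    have : (α+1) * (α+1) ≤ (γ+1) * (α+1) := by
      apply Nat.mul_le_mul_right; omega
    omega
  -- Step 0 : p ≤ K
  have hpK : p ≤ K := by
    by_contra h
    push_neg at h
    have h1 : p ^ 2 ≤ M * K := Nat.le_of_dvd (by positivity) hsq
    have h2 : M * K < p * p := by
      calc M * K ≤ K * K := Nat.mul_le_mul_right _ (by omega)
      _ < p * p := Nat.mul_lt_mul_of_lt_of_lt h h
    rw [pow_two] at h1; omega
  set L := Nat.log p K with hLdef
  have hL1 : 1 ≤ L := Nat.log_pos hp.one_lt hpK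
  have hK0 : K ≠ 0 := by omega
  have hKL : p ^ L ≤ K := Nat.pow_log_le_self p hK0
  have hKL2 : K < p ^ (L+1) := Nat.lt_pow_succ_log_self hp.one_lt K
  -- p^L is not in the window (0 carries), hence K = p^L + r with r ≤ α
  have hnwin : ¬ (α + 1 ≤ p ^ L ∧ p ^ L + α + 1 ≤ K) := by
    rintro ⟨h1, h2⟩
    have := hwin (p ^ L) h1 h2
    exact not_dvd_choose_pow_log hp hK0 (dvd_trans (dvd_pow_self p two_ne_zero) this)
  have hppL : p ≤ p ^ L := by
    calc p = p ^ 1 := (pow_one p).symm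
    _ ≤ p ^ L := Nat.pow_le_pow_right hp.pos hL1
  have hr : K - p ^ L ≤ α := by
    -- kill the case p^L ≤ α
    by_contra hcon
    push_neg at hcon
    rcases not_and_or.mp hnwin with h | h
    · push_neg at h
      -- p^L ≤ α : then K < p^(L+1) ≤ α * α contradiction with hK2
      have h3 : p ^ (L+1) = p ^ L * p := pow_succ p L
      have h4 : p ^ L * p ≤ α * α := Nat.mul_le_mul (by omega) (by omega)
      nlinarith
    · push_neg at h
      omega
  set r := K - p ^ L with hrdef
  have hKr : K = p ^ L + r := by omega
  obtain ⟨l, hLl⟩ : ∃ l, L = l + 1 := ⟨L - 1, by omega⟩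
  rw [hLl] at hKr hKL2 hppL hKL
  have hpl1 : p ^ l * p = p ^ (l+1) := (pow_succ p l).symm
  by_cases hcase : α + 1 ≤ p ^ l
  · -- one-carry witness d = p^l + r
    have hrpl : r < p ^ l := by omega
    have hwit := hwin (p ^ l + r) (by omega)
      (by
        have h2 : p ^ l + p ^ l ≤ p ^ l * p := by nlinarith
        omega)
    rw [hKr] at hwit
    exact not_sq_dvd_choose_one_carry hp hrpl hwit
  · -- p^l ≤ α : forces l = 0, K = p + r, then p ∣ M gives contradiction
    push_neg at hcase
    have hple : p ^ l ≤ α := by omega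
    -- p ≥ α + 2
    have hpa : α + 2 ≤ p := by
      by_contra hcon
      push_neg at hcon
      have h1 : K ≤ p * α + α := by
        have : p ^ (l+1) ≤ p * α := by
          rw [pow_succ]
          calc p ^ l * p ≤ α * p := Nat.mul_le_mul_right _ hple
          _ = p * α := mul_comm _ _
        omega
      nlinarith
    have hl0 : l = 0 := by
      by_contra hne
      have : p ≤ p ^ l := by
        calc p = p ^ 1 := (pow_one p).symm
        _ ≤ p ^ l := Nat.pow_le_pow_right hp.pos (by omega)
      omega
    subst hl0
    rw [pow_one] at hKr hppL
    -- ¬ p^2 ∣ K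
    have hnK : ¬ p ^ 2 ∣ K := by
      intro hdvd
      have h1 : p ^ 2 ≤ K := Nat.le_of_dvd (by omega) hdvd
      have : p * p ≤ p + r := by rw [← pow_two]; omega
      nlinarith
    -- hence p ∣ M
    have hpM : p ∣ M := by
      by_contra hnM
      have hcop : Nat.Coprime (p ^ 2) M := (hp.coprime_iff_not_dvd.mpr hnM).pow_left _
      exact hnK (hcop.dvd_of_dvd_mul_left hsq)
    have : p ≤ M := Nat.le_of_dvd (by omega) hpM
    omega


/-- Pascal finite differences extend the divisibility family. -/
lemma window_dvd {Φ n w m : ℕ} (hm1 : 1 ≤ m) (hmw : m ≤ w) (hwn : w ≤ n)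
    (hdvd : ∀ i < m, Φ ∣ (n - i).choose (w - i)) :
    ∀ j s, j + s + 1 ≤ m → Φ ∣ (n + 1 - m + s).choose (w + 1 - m + j + s) := by
  intro j
  induction j with
  | zero =>
    intro s hs
    have h := hdvd (m - 1 - s) (by omega)
    have e1 : n - (m - 1 - s) = n + 1 - m + s := by omega
    have e2 : w - (m - 1 - s) = w + 1 - m + 0 + s := by omega
    rw [e1, e2] at h
    exact h
  | succ j ih =>
    intro s hs
    have h1 := ih (s + 1) (by omega)
    have h2 := ih s (by omega)
    have hpascal : (n + 1 - m + s + 1).choose (w + 1 - m + j + s + 1) =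
        (n + 1 - m + s).choose (w + 1 - m + j + s) +
        (n + 1 - m + s).choose (w + 1 - m + j + s + 1) :=
      Nat.choose_succ_succ (n + 1 - m + s) (w + 1 - m + j + s)
    have e1 : n + 1 - m + (s + 1) = n + 1 - m + s + 1 := by omega
    have e2 : w + 1 - m + j + (s + 1) = w + 1 - m + j + s + 1 := by omega
    rw [e1, e2] at h1
    have e3 : w + 1 - m + (j + 1) + s = w + 1 - m + j + s + 1 := by omega
    rw [e3]
    exact (Nat.dvd_add_right h2).mp (hpascal ▸ h1)

/-- The squarefreeness theorem, packaged. -/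
lemma squarefree_of_conditions {n w w' m : ℕ} (hw : 2 ≤ w) (hww' : w ≤ w')
    (hn : n = w + w') (hm1 : 1 ≤ m) (hmw : m ≤ w)
    (hLloyd : 1 + w * w' = m * (n + 1 - m))
    (hdvd : ∀ i < m, (1 + w * w') ∣ (n - i).choose (w - i)) :
    Squarefree (1 + w * w') := by
  set Φ := 1 + w * w' with hΦ
  -- m < w
  have hmltw : m < w := by
    rcases Nat.lt_or_ge m w with h | h
    · exact h
    · exfalso
      have hmew : m = w := by omega
      have e : n + 1 - m = w' + 1 := by omega
      rw [hΦ, e, hmew] at hLloyd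
      have : w * (w' + 1) = w * w' + w := by ring
      omega
  obtain ⟨α, hα⟩ : ∃ α, w = m + α ∧ 1 ≤ α := ⟨w - m, by omega⟩
  obtain ⟨hα, hα1⟩ := hα
  obtain ⟨γ, hγ⟩ : ∃ γ, w' = m + γ := ⟨w' - m, by omega⟩
  have hαγ : α ≤ γ := by omega
  -- m = α * γ + 1
  have hm : m = α * γ + 1 := by
    have e : n + 1 - m = m + α + γ + 1 := by omega
    rw [hΦ, e, hα, hγ] at hLloyd
    have hz : (1:ℤ) + (m + α) * (m + γ) = m * (m + α + γ + 1) := by exact_mod_cast hLloyd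
    have : (m:ℤ) = α * γ + 1 := by linear_combination -hz
    exact_mod_cast this
  -- K = n + 1 - m
  have hK : n + 1 - m = (γ + 1) * (α + 1) + 1 := by
    have : (γ + 1) * (α + 1) + 1 = α * γ + α + γ + 2 := by ring
    omega
  -- full window divisibility
  have hγw : γ ≤ w := by
    rcases Nat.lt_or_ge w γ with h | h
    · exfalso; nlinarith
    · exact h
  have hwin : ∀ d, α + 1 ≤ d → d + α + 1 ≤ (γ + 1) * (α + 1) + 1 →
      Φ ∣ ((γ + 1) * (α + 1) + 1).choose d := by
    have hbase : ∀ d, α + 1 ≤ d → d ≤ w → Φ ∣ (n + 1 - m).choose d := by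
      intro d hd1 hd2
      have h := window_dvd hm1 hmw (by omega) hdvd (d - (α + 1)) 0 (by omega)
      have e : w + 1 - m + (d - (α + 1)) + 0 = d := by omega
      rw [e, Nat.add_zero] at h
      exact h
    intro d hd1 hd2
    rw [← hK]
    rcases le_or_gt d w with h | h
    · exact hbase d hd1 h
    · -- use symmetry
      have hKval : n + 1 - m = m + α + γ + 1 := by omega
      have hdK : d ≤ n + 1 - m := by omega
      rw [← Nat.choose_symm hdK]
      apply hbase
      · omega
      · -- n + 1 - m - d ≤ w : since d ≥ w + 1, n+1-m-d ≤ n-m-w = γ ≤ w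
        omega
  -- now squarefreeness
  rw [Nat.squarefree_iff_prime_squarefree]
  intro p hp hpdvd
  have hsq : p ^ 2 ∣ (α * γ + 1) * ((γ + 1) * (α + 1) + 1) := by
    rw [← hm, ← hK, ← hLloyd]
    rwa [pow_two]
  exact nt_main hp hα1 (by omega) hsq
    (fun d h1 h2 => dvd_trans (by rwa [pow_two]) (hwin d h1 h2))

end Stmt10Aux


open scoped BigOperators

/-- A code in the Johnson scheme `J(n,w)`: a set of `w`-element subsets of `{1,…,n}`. -/
def IsJohnsonCode (n w : ℕ) (C : Set (Finset (Fin n))) : Prop :=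
  ∀ c ∈ C, c.card = w

/-- `C` is a 1-perfect code in `J(n,w)`: every `w`-subset of `{1,…,n}` is within Johnson
distance 1 (Johnson distance between `w`-sets `x`, `y` is `w - |x ∩ y|`) of exactly
one codeword of `C`. -/
def IsOnePerfect (n w : ℕ) (C : Set (Finset (Fin n))) : Prop :=
  IsJohnsonCode n w C ∧
    ∀ s : Finset (Fin n), s.card = w → ∃! c, c ∈ C ∧ w - (c ∩ s).card ≤ 1

/-- For a nontrivial 1-perfect code in `J(2w+a, w)`, with `p₁, …, p_r` the distinct
prime divisors of `1 + w(w+a)`: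
`0 < Σᵢ log_{w+a} pᵢ - (1 + log_{w+a} w) ≤ 1/(w(w+a))`. -/
theorem stmt_10 (w a : ℕ) (hw : 1 ≤ w) (C : Set (Finset (Fin (2 * w + a))))
    (hperf : IsOnePerfect (2 * w + a) w C) (hnontriv : C.Nontrivial) :
    0 < (∑ p ∈ (1 + w * (w + a)).primeFactors, Real.log p / Real.log ((w : ℝ) + a)) -
        (1 + Real.log w / Real.log ((w : ℝ) + a)) ∧
      (∑ p ∈ (1 + w * (w + a)).primeFactors, Real.log p / Real.log ((w : ℝ) + a)) -
        (1 + Real.log w / Real.log ((w : ℝ) + a)) ≤ 1 / ((w : ℝ) * ((w : ℝ) + a)) := by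
  classical
  obtain ⟨hjc, huniq0⟩ := hperf
  -- `w = 1` is impossible for a nontrivial code
  have hw1 : w ≠ 1 := by
    intro h1
    obtain ⟨c1, hc1, c2, hc2, hne⟩ := hnontriv
    have hcard1 : c1.card = w := hjc c1 hc1
    obtain ⟨c, -, hcuniq⟩ := huniq0 c1 hcard1
    have e1 : c1 = c := hcuniq c1 ⟨hc1, by omega⟩
    have e2 : c2 = c := hcuniq c2 ⟨hc2, by omega⟩
    exact hne (e1.trans e2.symm)
  have hw2 : 2 ≤ w := by omega
  have hCfin : C.Finite := Set.toFinite C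
  set F : Finset (Finset (Fin (2 * w + a))) := hCfin.toFinset with hF
  have hmemF : ∀ c, c ∈ F ↔ c ∈ C := fun c => hCfin.mem_toFinset
  have hcard : ∀ c ∈ F, c.card = w := fun c hc => hjc c ((hmemF c).mp hc)
  have huniq : ∀ s : Finset (Fin (2 * w + a)), s.card = w →
      ∃! c, c ∈ F ∧ w ≤ (c ∩ s).card + 1 := by
    intro s hs
    obtain ⟨c, ⟨hcC, hcd⟩, hu⟩ := huniq0 s hs
    refine ⟨c, ⟨(hmemF c).mpr hcC, by omega⟩, ?_⟩
    rintro y ⟨hyF, hyd⟩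
    exact hu y ⟨(hmemF y).mp hyF, by omega⟩
  obtain ⟨m, hm1, hmw, hLloyd, hdvd⟩ :=
    Stmt10Aux.combinatorial_main F hcard huniq (by omega) (by omega)
  set w' := w + a with hw'
  have hnw : 2 * w + a - w = w' := by omega
  rw [hnw] at hLloyd hdvd
  -- `(w, a) = (2, 0)` is impossible (Lloyd has no solution)
  have hwa : ¬ (w = 2 ∧ a = 0) := by
    rintro ⟨hw2', ha0⟩
    rw [hw', hw2', ha0] at hLloyd
    rw [hw2'] at hmw
    norm_num at hLloyd
    interval_cases m <;> omega
  have hw'3 : 3 ≤ w' := by omega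
  have hsf : Squarefree (1 + w * w') :=
    Stmt10Aux.squarefree_of_conditions hw2 (by omega) (by omega) hm1 hmw hLloyd hdvd
  -- analytic conclusion
  set Φ := 1 + w * w' with hΦ
  have hΦ2 : 2 ≤ Φ := by
    have : 1 ≤ w * w' := Nat.one_le_iff_ne_zero.mpr (by positivity)
    omega
  set L := Real.log ((w : ℝ) + a) with hL
  have hcast : ((w' : ℕ) : ℝ) = (w : ℝ) + a := by rw [hw']; push_cast; ring
  have hL1 : 1 < L := by
    rw [hL, ← hcast, show (1:ℝ) = Real.log (Real.exp 1) by rw [Real.log_exp]]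
    apply Real.log_lt_log (Real.exp_pos 1)
    calc Real.exp 1 < 2.7182818286 := Real.exp_one_lt_d9
    _ < 3 := by norm_num
    _ ≤ (w' : ℝ) := by exact_mod_cast hw'3
  have hL0 : 0 < L := by linarith
  have hsum : (∑ p ∈ Φ.primeFactors, Real.log p) = Real.log (Φ : ℝ) := by
    have h1 : ((Φ : ℕ) : ℝ) = ∏ p ∈ Φ.primeFactors, (p : ℝ) := by
      rw [← Nat.cast_prod, Nat.prod_primeFactors_of_squarefree hsf]
    rw [h1, Real.log_prod]
    intro p hp
    exact_mod_cast (Nat.prime_of_mem_primeFactors hp).pos.ne'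
  have hgoal : (∑ p ∈ Φ.primeFactors, Real.log p / Real.log ((w : ℝ) + a)) =
      Real.log (Φ : ℝ) / L := by
    rw [← Finset.sum_div, hsum]
  have hwR : (0:ℝ) < w := by exact_mod_cast (by omega : 0 < w)
  have hw'R : (0:ℝ) < (w:ℝ) + a := by positivity
  have hNpos : (0:ℝ) < (w:ℝ) * ((w:ℝ) + a) := by positivity
  have hΦR : (Φ : ℝ) = (w:ℝ) * ((w:ℝ) + a) + 1 := by
    rw [hΦ, hw']; push_cast; ring
  have hlogmul : Real.log ((w:ℝ) * ((w:ℝ) + a)) = Real.log w + L := by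
    rw [Real.log_mul (by positivity) (by positivity), hL]
  have hE : (∑ p ∈ Φ.primeFactors, Real.log p / Real.log ((w : ℝ) + a)) -
      (1 + Real.log w / Real.log ((w : ℝ) + a)) =
      (Real.log (Φ : ℝ) - Real.log ((w:ℝ) * ((w:ℝ) + a))) / L := by
    rw [hgoal, hlogmul, ← hL]
    field_simp
    ring
  have hlt : Real.log ((w:ℝ) * ((w:ℝ) + a)) < Real.log (Φ : ℝ) := by
    apply Real.log_lt_log hNpos
    rw [hΦR]; linarith
  constructor
  · rw [hE]
    apply div_pos (by linarith) hL0
  · rw [hE]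
    have hstep1 : Real.log (Φ : ℝ) - Real.log ((w:ℝ) * ((w:ℝ) + a)) ≤
        1 / ((w:ℝ) * ((w:ℝ) + a)) := by
      have h2 := Real.log_le_sub_one_of_pos
        (show (0:ℝ) < (Φ:ℝ) / ((w:ℝ) * ((w:ℝ) + a)) by positivity)
      rw [Real.log_div (by positivity) (by positivity)] at h2
      have h3 : (Φ:ℝ) / ((w:ℝ) * ((w:ℝ) + a)) - 1 = 1 / ((w:ℝ) * ((w:ℝ) + a)) := by
        rw [hΦR]; field_simp; ring
      linarith
    calc (Real.log (Φ : ℝ) - Real.log ((w:ℝ) * ((w:ℝ) + a))) / L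
        ≤ (Real.log (Φ : ℝ) - Real.log ((w:ℝ) * ((w:ℝ) + a))) := by
          apply div_le_self (by linarith) (by linarith)
    _ ≤ 1 / ((w:ℝ) * ((w:ℝ) + a)) := hstep1
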